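/- For every a ∈ (3/2, 2) there exists x_a ∈ (0, π) such that f_a(x_a) = 0, where f_a(x) = a·ln((sin x)/x) − 2·ln(cos(x/2)), and for every x ∈ (0, x_a] the inequality ((sin x)/x)^a ≤ cos²(x/2) holds. -/

import Mathlib

open Real

/-- Key negativity estimate: for small positive u, the function is negative. -/
lemma aux_neg_small (a u : ℝ) (ha1 : 3/2 < a) (ha2 : a < 2) (hu : 0 < u)
    (hub : u ≤ (2*a-3)/12) :
    (a - 2) * Real.log (Real.cos u) + a * Real.log (Real.sin u / u) < 0 := by
  have hu1 : u ≤ 1/12 := by linarith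
  have hsp : 0 < Real.sin u := Real.sin_pos_of_pos_of_lt_pi hu (by linarith [Real.pi_gt_three])
  have hcb : 1 - u^2/2 ≤ Real.cos u := Real.one_sub_sq_div_two_le_cos
  have hcp : 0 < Real.cos u := by nlinarith
  have habs : |u| ≤ 1 := by rw [abs_of_pos hu]; linarith
  have hsb := Real.sin_bound habs
  rw [abs_of_pos hu] at hsb
  have hsin_le : Real.sin u ≤ u - u^3/6 + u^4*(5/96) := by
    have h := (abs_le.mp hsb).2; nlinarith [pow_pos hu 4, mul_nonneg (pow_pos hu 4).le (show (0:ℝ) ≤ 1 - u by linarith)]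
  have hs1 : Real.log (Real.sin u / u) ≤ Real.sin u / u - 1 :=
    Real.log_le_sub_one_of_pos (div_pos hsp hu)
  have hA : Real.log (Real.sin u / u) ≤ -(u^2)/6 + u^3*(5/96) := by
    have h2 : Real.sin u / u - 1 ≤ -(u^2)/6 + u^3*(5/96) := by
      rw [div_sub_one hu.ne', div_le_iff₀ hu]; nlinarith
    linarith
  have hc1 : Real.log (Real.cos u)⁻¹ ≤ (Real.cos u)⁻¹ - 1 :=
    Real.log_le_sub_one_of_pos (by positivity)
  rw [Real.log_inv] at hc1
  have hB : -Real.log (Real.cos u) ≤ (u^2/2) * (1 + u^2) := by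
    have h2 : 1 / Real.cos u ≤ (u^2/2)*(1+u^2) + 1 := by
      rw [div_le_iff₀ hcp]
      nlinarith [mul_le_mul_of_nonneg_left hcb
          (show (0:ℝ) ≤ u^2/2*(1+u^2)+1 by positivity),
        pow_le_pow_of_le_one hu.le (show u ≤ 1 by linarith) (show 4 ≤ 6 by norm_num)]
    rw [← one_div] at hc1
    linarith
  have h3 : (a-2) * Real.log (Real.cos u) ≤ (2-a) * ((u^2/2)*(1+u^2)) := by
    have := mul_le_mul_of_nonneg_left hB (show (0:ℝ) ≤ 2-a by linarith)
    nlinarith [this]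
  have h4 : a * Real.log (Real.sin u / u) ≤ a * (-(u^2)/6 + u^3*(5/96)) :=
    mul_le_mul_of_nonneg_left hA (by linarith)
  have hfin : (2-a) * ((u^2/2)*(1+u^2)) + a * (-(u^2)/6 + u^3*(5/96)) < 0 := by
    nlinarith [mul_nonneg (show (0:ℝ) ≤ a - 3/2 by linarith) (pow_nonneg hu.le 4),
      mul_nonneg (show (0:ℝ) ≤ 1/12 - u by linarith) (pow_nonneg hu.le 3),
      mul_nonneg (show (0:ℝ) ≤ (2*a-3)/12 - u by linarith) (sq_nonneg u),
      mul_nonneg (show (0:ℝ) ≤ 2 - a by linarith) (pow_nonneg hu.le 3),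
      mul_pos (show (0:ℝ) < 2*a-3 by linarith) (mul_pos hu hu)]
  linarith

theorem sinc_pow_le_cos_sq_up_to_zero (a : ℝ) (ha : a ∈ Set.Ioo (3 / 2 : ℝ) 2) :
    ∃ x_a ∈ Set.Ioo (0 : ℝ) π,
      a * Real.log (Real.sin x_a / x_a) - 2 * Real.log (Real.cos (x_a / 2)) = 0 ∧
      ∀ x ∈ Set.Ioc (0 : ℝ) x_a, (Real.sin x / x) ^ a ≤ Real.cos (x / 2) ^ 2 := by
  obtain ⟨ha1, ha2⟩ := ha
  have hpi := Real.pi_gt_three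
  set g : ℝ → ℝ := fun x => a * Real.log (Real.sin x / x) - 2 * Real.log (Real.cos (x / 2))
    with hgdef
  -- basic positivity facts on (0, π)
  have hfacts : ∀ y : ℝ, 0 < y → y < π →
      0 < Real.sin y / y ∧ 0 < Real.cos (y/2) ∧ 0 < Real.sin (y/2) / (y/2) := by
    intro y hy1 hy2
    refine ⟨div_pos (Real.sin_pos_of_pos_of_lt_pi hy1 hy2) hy1, ?_, ?_⟩
    · exact Real.cos_pos_of_mem_Ioo ⟨by linarith, by linarith⟩
    · exact div_pos (Real.sin_pos_of_pos_of_lt_pi (by linarith) (by linarith)) (by linarith)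
  -- decomposition
  have hdecomp : ∀ y : ℝ, 0 < y → y < π →
      g y = (a - 2) * Real.log (Real.cos (y/2)) + a * Real.log (Real.sin (y/2) / (y/2)) := by
    intro y hy1 hy2
    obtain ⟨hs, hc, hs2⟩ := hfacts y hy1 hy2
    have hsin : Real.sin y = 2 * Real.sin (y/2) * Real.cos (y/2) := by
      have := Real.sin_two_mul (y/2)
      rw [show 2*(y/2) = y by ring] at this
      exact this
    have hmul : Real.sin y / y = Real.cos (y/2) * (Real.sin (y/2) / (y/2)) := by
      rw [hsin]; field_simp
    simp only [hgdef]
    rw [hmul, Real.log_mul hc.ne' hs2.ne']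
    ring
  -- continuity
  have hcont : ∀ y : ℝ, 0 < y → y < π → ContinuousAt g y := by
    intro y hy1 hy2
    obtain ⟨hs, hc, _⟩ := hfacts y hy1 hy2
    have c1 : ContinuousAt (fun x : ℝ => Real.sin x / x) y :=
      Real.continuous_sin.continuousAt.div continuousAt_id hy1.ne'
    have c2 : ContinuousAt (fun x : ℝ => Real.cos (x/2)) y :=
      (Real.continuous_cos.comp (continuous_id.div_const 2)).continuousAt
    exact (continuousAt_const.mul (c1.log hs.ne')).sub
      (continuousAt_const.mul (c2.log hc.ne'))
  -- negativity on (0, δ]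
  set δ : ℝ := (2*a-3)/6 with hδdef
  have hδpos : 0 < δ := by simp only [hδdef]; linarith
  have hδlt : δ < 1 := by simp only [hδdef]; linarith
  have hneg : ∀ x : ℝ, 0 < x → x ≤ δ → g x < 0 := by
    intro x hx1 hx2
    have hx3 : x < π := by linarith
    rw [hdecomp x hx1 hx3]
    exact aux_neg_small a (x/2) ha1 ha2 (by linarith) (by simp only [hδdef] at hx2; linarith)
  -- a point b where g b > 0
  set K : ℝ := (2 * Real.log (π/2) + 1) / (2 - a) with hKdef
  have hlogpi : 0 < Real.log (π/2) := Real.log_pos (by linarith)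
  have hK : 0 < K := div_pos (by linarith) (by linarith)
  set c : ℝ := Real.exp (-K) with hcdef
  have hc0 : 0 < c := Real.exp_pos _
  have hc1 : c < 1 := Real.exp_lt_one_iff.mpr (by linarith)
  set u : ℝ := Real.arccos c with hudef
  have hu0 : 0 < u := Real.arccos_pos.mpr hc1
  have hu2 : u < π/2 := Real.arccos_lt_pi_div_two.mpr hc0
  set b : ℝ := 2*u with hbdef
  have hb0 : 0 < b := by simp only [hbdef]; linarith
  have hbπ : b < π := by simp only [hbdef]; linarith
  have hcosbu : Real.cos u = c := Real.cos_arccos (by linarith) hc1.le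
  have hlogc : Real.log c = -K := by rw [hcdef, Real.log_exp]
  have hgb : 1 ≤ g b := by
    rw [hdecomp b hb0 hbπ, show b/2 = u by simp only [hbdef]; ring, hcosbu, hlogc]
    have hsinc_lb : 2/π ≤ Real.sin u / u := by
      rw [le_div_iff₀ hu0]
      exact Real.mul_le_sin hu0.le hu2.le
    have hsinc_ub : Real.sin u / u < 1 := by
      rw [div_lt_one hu0]; exact Real.sin_lt hu0
    have hlog_lb : Real.log (2/π) ≤ Real.log (Real.sin u / u) :=
      Real.log_le_log (div_pos two_pos Real.pi_pos) hsinc_lb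
    have hlog2π : Real.log (2/π) = -Real.log (π/2) := by
      rw [show (2/π : ℝ) = (π/2)⁻¹ by rw [inv_div], Real.log_inv]
    have hlog_ub : Real.log (Real.sin u / u) ≤ 0 :=
      Real.log_nonpos (div_pos (Real.sin_pos_of_pos_of_lt_pi hu0 (by linarith)) hu0).le hsinc_ub.le
    have h1 : a * Real.log (Real.sin u / u) ≥ 2 * Real.log (Real.sin u / u) := by nlinarith
    have h2 : (a-2) * (-K) = 2 * Real.log (π/2) + 1 := by
      have hne : (2:ℝ) - a ≠ 0 := by linarith
      rw [hKdef]; field_simp; ring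
    nlinarith [h1, h2, hlog_lb, hlog2π]
  have hgb0 : 0 ≤ g b := by linarith
  -- b > δ
  have hδb : δ < b := by
    by_contra h
    push_neg at h
    have := hneg b hb0 h
    linarith
  -- the set A
  set A : Set ℝ := {x ∈ Set.Icc δ b | 0 ≤ g x} with hAdef
  have hAne : A.Nonempty := ⟨b, ⟨⟨hδb.le, le_refl _⟩, hgb0⟩⟩
  have hgcont : ContinuousOn g (Set.Icc δ b) := by
    intro y hy
    exact (hcont y (by linarith [hy.1]) (by linarith [hy.2])).continuousWithinAt
  have hAclosed : IsClosed A := by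
    have : A = Set.Icc δ b ∩ g ⁻¹' (Set.Ici 0) := by
      ext x; simp [hAdef, Set.mem_sep_iff]
    rw [this]
    exact hgcont.preimage_isClosed_of_isClosed isClosed_Icc isClosed_Ici
  have hAcompact : IsCompact A :=
    isCompact_Icc.of_isClosed_subset hAclosed (fun x hx => hx.1)
  set x_a : ℝ := sInf A with hxadef
  have hxamem : x_a ∈ A := hAcompact.sInf_mem hAne
  obtain ⟨⟨hxa1, hxa2⟩, hxa3⟩ := hxamem
  have hxa0 : 0 < x_a := lt_of_lt_of_le hδpos hxa1
  have hxaπ : x_a < π := lt_of_le_of_lt hxa2 hbπ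
  -- g < 0 strictly below x_a
  have hbelow : ∀ x : ℝ, 0 < x → x < x_a → g x < 0 := by
    intro x hx1 hx2
    by_cases hxδ : x ≤ δ
    · exact hneg x hx1 hxδ
    · push_neg at hxδ
      by_contra h
      push_neg at h
      have hxA : x ∈ A := ⟨⟨hxδ.le, by linarith⟩, h⟩
      have := csInf_le ⟨δ, fun y hy => hy.1.1⟩ hxA
      rw [← hxadef] at this
      linarith
  -- g x_a ≤ 0 by left continuity
  have hle : g x_a ≤ 0 := by
    have ht : Filter.Tendsto g (nhdsWithin x_a (Set.Iio x_a)) (nhds (g x_a)) :=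
      ((hcont x_a hxa0 hxaπ).tendsto).mono_left nhdsWithin_le_nhds
    refine le_of_tendsto ht ?_
    filter_upwards [Ioo_mem_nhdsLT_of_mem (show x_a ∈ Set.Ioc 0 x_a from ⟨hxa0, le_refl _⟩)]
      with x hx
    exact (hbelow x hx.1 hx.2).le
  have hzero : g x_a = 0 := le_antisymm hle hxa3
  refine ⟨x_a, ⟨hxa0, hxaπ⟩, hzero, ?_⟩
  intro x hx
  obtain ⟨hx1, hx2⟩ := hx
  have hxπ : x < π := lt_of_le_of_lt hx2 hxaπ
  have hgx : g x ≤ 0 := by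
    rcases lt_or_eq_of_le hx2 with h | h
    · exact (hbelow x hx1 h).le
    · rw [h, hzero]
  obtain ⟨hs, hc, _⟩ := hfacts x hx1 hxπ
  have key : a * Real.log (Real.sin x / x) ≤ 2 * Real.log (Real.cos (x/2)) := by
    simp only [hgdef] at hgx; linarith
  have h1 : (Real.sin x / x) ^ a = Real.exp (Real.log (Real.sin x / x) * a) :=
    Real.rpow_def_of_pos hs a
  have h2 : Real.cos (x/2) ^ 2 = Real.exp (2 * Real.log (Real.cos (x/2))) := by
    rw [show (2 : ℝ) * Real.log (Real.cos (x/2)) = Real.log (Real.cos (x/2) ^ 2) by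
      rw [Real.log_pow]; push_cast; ring]
    rw [Real.exp_log (by positivity)]
  rw [h1, h2]
  exact Real.exp_le_exp.mpr (by linarith)
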